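/- If R ∈ RatFunc ℂ satisfies 𝔉(R) = R, then the denominator of R (written in lowest terms) is squarefree — i.e. all poles of R are simple — and every root z ∈ ℂ of the denominator is either z = 0 or satisfies z^r = 1 for some odd positive integer r. -/

import Mathlib

/-- The `n`-th coefficient of the Laurent expansion at `0` of a rational function. -/
noncomputable def coeffL (R : RatFunc ℂ) (n : ℤ) : ℂ :=
  ((R : LaurentSeries ℂ)).coeff n

open Polynomial HahnSeries

noncomputable section ST16sec

namespace ST16

local notation "LS" => LaurentSeries ℂ

def negXfun (f : LS) : LS :=
  ⟨fun n => (-1 : ℂ) ^ n * f.coeff n, f.isPWO_support'.mono (fun n hn => by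
    simp only [Function.mem_support, ne_eq] at hn ⊢
    intro h; exact hn (by rw [h, mul_zero]))⟩

lemma negXfun_coeff (f : LS) (n : ℤ) : (negXfun f).coeff n = (-1 : ℂ)^n * f.coeff n := rfl

lemma negXfun_support (f : LS) : (negXfun f).support = f.support := by
  ext n
  simp only [HahnSeries.mem_support, negXfun_coeff, ne_eq, mul_eq_zero, not_or]
  constructor
  · exact fun h => h.2
  · intro h; exact ⟨zpow_ne_zero _ (by norm_num), h⟩

def negX : LS →+* LS where
  toFun := negXfun
  map_zero' := by ext n; simp [negXfun_coeff]
  map_one' := by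
    ext n
    simp only [negXfun_coeff, HahnSeries.coeff_one]
    split <;> simp_all
  map_add' x y := by ext n; simp [negXfun_coeff, HahnSeries.coeff_add, mul_add]
  map_mul' x y := by
    ext n
    have hanti : Finset.antidiagonal (negXfun x).isPWO_support (negXfun y).isPWO_support n
        = Finset.antidiagonal x.isPWO_support y.isPWO_support n := by
      ext ⟨i, j⟩
      simp [Finset.mem_addAntidiagonal, negXfun_support]
    rw [negXfun_coeff, HahnSeries.coeff_mul, HahnSeries.coeff_mul, hanti, Finset.mul_sum]
    refine Finset.sum_congr rfl ?_
    rintro ⟨i, j⟩ hij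
    rw [Finset.mem_addAntidiagonal] at hij
    obtain ⟨hi, hj, hsum⟩ := hij
    rw [negXfun_coeff, negXfun_coeff, ← hsum, zpow_add₀ (by norm_num : (-1:ℂ) ≠ 0)]
    ring

lemma negX_coeff (f : LS) (n : ℤ) : (negX f).coeff n = (-1 : ℂ)^n * f.coeff n := rfl

def dbl : ℤ →+ ℤ := AddMonoidHom.mk' (fun n => 2*n) (by intro a b; ring)

def sqX : LS →+* LS :=
  HahnSeries.embDomainRingHom dbl (fun a b h => by simp only [dbl, AddMonoidHom.mk'_apply] at h; omega)
    (fun a b => by simp only [dbl, AddMonoidHom.mk'_apply]; omega)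

lemma sqX_coeff_even (f : LS) (m : ℤ) : (sqX f).coeff (2*m) = f.coeff m := by
  have : (2*m : ℤ) = dbl m := rfl
  rw [this]
  exact HahnSeries.embDomain_coeff

lemma sqX_coeff_odd (f : LS) (m : ℤ) : (sqX f).coeff (2*m+1) = 0 := by
  refine HahnSeries.embDomain_notin_range ?_
  rintro ⟨a, ha⟩
  have : (2*a : ℤ) = 2*m+1 := ha
  omega

lemma sqX_single (m : ℤ) (r : ℂ) : sqX (HahnSeries.single m r) = HahnSeries.single (2*m) r :=
  HahnSeries.embDomain_single

def ih : ℂ[X] →+* LS := (HahnSeries.ofPowerSeries ℤ ℂ).comp (Polynomial.coeToPowerSeries.ringHom)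
lemma ih_apply (f : ℂ[X]) : ih f = HahnSeries.ofPowerSeries ℤ ℂ (f : PowerSeries ℂ) := rfl

lemma ih_inj : Function.Injective ih :=
  (HahnSeries.ofPowerSeries_injective).comp (Polynomial.coe_injective ℂ)

lemma ih_X : ih Polynomial.X = HahnSeries.single 1 1 := by
  rw [ih_apply]
  simp [HahnSeries.ofPowerSeries_X]

lemma ih_C (a : ℂ) : ih (Polynomial.C a) = HahnSeries.C a := by
  rw [ih_apply]
  simp [HahnSeries.ofPowerSeries_C]

def cneg : ℂ[X] →+* ℂ[X] := Polynomial.eval₂RingHom Polynomial.C (-Polynomial.X)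
def csq : ℂ[X] →+* ℂ[X] := Polynomial.eval₂RingHom Polynomial.C (Polynomial.X ^ 2)
lemma cneg_apply (f : ℂ[X]) : cneg f = f.comp (-Polynomial.X) := rfl
lemma csq_apply (f : ℂ[X]) : csq f = f.comp (Polynomial.X ^ 2) := rfl

lemma negX_ih (f : ℂ[X]) : negX (ih f) = ih (cneg f) := by
  have : negX.comp ih = ih.comp cneg := by
    apply Polynomial.ringHom_ext
    · intro a
      simp only [RingHom.comp_apply, cneg_apply, Polynomial.C_comp, ih_C]
      ext n
      rw [negX_coeff, HahnSeries.C_apply, HahnSeries.coeff_single]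
      split
      · next h => subst h; norm_num
      · ring
    · simp only [RingHom.comp_apply, cneg_apply, Polynomial.X_comp, ih_X, map_neg]
      ext n
      rw [negX_coeff, HahnSeries.coeff_neg, HahnSeries.coeff_single]
      split
      · next h => subst h; norm_num
      · ring
  exact DFunLike.congr_fun this f

lemma sqX_ih (f : ℂ[X]) : sqX (ih f) = ih (csq f) := by
  have : sqX.comp ih = ih.comp csq := by
    apply Polynomial.ringHom_ext
    · intro a
      simp only [RingHom.comp_apply, csq_apply, Polynomial.C_comp, ih_C, HahnSeries.C_apply,
        sqX_single, mul_zero]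
    · simp only [RingHom.comp_apply, csq_apply, Polynomial.X_comp, ih_X, sqX_single, map_pow,
        mul_one]
      rw [sq, HahnSeries.single_mul_single, mul_one]
      norm_num
  exact DFunLike.congr_fun this f

lemma master (L : LS) (hyp : ∀ k : ℤ, L.coeff (2*k+1) = L.coeff k) :
    L - negX L = HahnSeries.single 1 2 * sqX L := by
  ext n
  rw [HahnSeries.coeff_sub, negX_coeff]
  have hX : (HahnSeries.single (1:ℤ) (2:ℂ) * sqX L).coeff n = 2 * (sqX L).coeff (n-1) := by
    have h := HahnSeries.coeff_single_mul_add (r := (2:ℂ)) (x := sqX L) (a := n-1) (b := 1)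
    rw [sub_add_cancel] at h
    exact h
  rw [hX]
  rcases Int.even_or_odd n with ⟨m, hm⟩ | ⟨m, hm⟩
  · subst hm
    have h1 : (-1 : ℂ) ^ (m + m) = 1 := Even.neg_one_zpow ⟨m, rfl⟩
    have h2 : (m + m - 1 : ℤ) = 2*(m-1)+1 := by ring
    rw [h1, h2, sqX_coeff_odd, one_mul, sub_self, mul_zero]
  · subst hm
    have h1 : (-1 : ℂ) ^ (2*m+1) = -1 := Odd.neg_one_zpow ⟨m, rfl⟩
    have h2 : (2*m+1-1 : ℤ) = 2*m := by ring
    rw [h1, h2, sqX_coeff_even, hyp m]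
    ring

lemma diamond (R : RatFunc ℂ)
    (hyp : ∀ k : ℤ, (R : LS).coeff (2*k+1) = (R : LS).coeff k) :
    (R.num * cneg R.denom - cneg R.num * R.denom) * csq R.denom
      = Polynomial.C 2 * Polynomial.X * csq R.num * (R.denom * cneg R.denom) := by
  set p := R.num with hp
  set q := R.denom with hqdef
  set L : LS := (R : LS) with hL
  have hq0 : ih q ≠ 0 := fun h => R.denom_ne_zero (ih_inj (by rw [h, map_zero]))
  have e1 : ih q * L = ih p := by
    rw [hL, show ((R : RatFunc ℂ) : LS) = ((R.num : PowerSeries ℂ) : LS) / ((R.denom : PowerSeries ℂ) : LS) from by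
      rw [RatFunc.coe_coe, RatFunc.coe_coe, ← map_div₀]; exact congrArg _ (RatFunc.num_div_denom R).symm]
    rw [div_eq_mul_inv, ← mul_assoc]
    rw [show ((R.num : PowerSeries ℂ) : LS) = ih p from rfl,
        show ((R.denom : PowerSeries ℂ) : LS) = ih q from rfl]
    field_simp
  have e2 : ih (cneg q) * negX L = ih (cneg p) := by
    have h := congrArg negX e1
    rwa [map_mul, negX_ih, negX_ih] at h
  have e3 : ih (csq q) * sqX L = ih (csq p) := by
    have h := congrArg sqX e1
    rwa [map_mul, sqX_ih, sqX_ih] at h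
  have key := master L hyp
  have hs2 : ih (Polynomial.C 2) * ih Polynomial.X = HahnSeries.single 1 2 := by
    rw [ih_C, ih_X, HahnSeries.C_apply, HahnSeries.single_mul_single]
    norm_num
  apply ih_inj
  simp only [map_mul, map_sub]
  linear_combination (ih q * ih (cneg q) * ih (csq q)) * key -
    (ih (cneg q) * ih (csq q)) * e1 + (ih q * ih (csq q)) * e2 +
    (HahnSeries.single 1 2 * ih q * ih (cneg q)) * e3 -
    (ih (csq p) * ih q * ih (cneg q)) * hs2

lemma cneg_cneg (f : ℂ[X]) : cneg (cneg f) = f := by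
  rw [cneg_apply, cneg_apply, Polynomial.comp_assoc]
  simp

lemma cneg_csq (f : ℂ[X]) : cneg (csq f) = csq f := by
  rw [cneg_apply, csq_apply, Polynomial.comp_assoc]
  simp [neg_pow]

lemma eval_cneg (f : ℂ[X]) (x : ℂ) : (cneg f).eval x = f.eval (-x) := by
  rw [cneg_apply, Polynomial.eval_comp]; simp

lemma eval_csq (f : ℂ[X]) (x : ℂ) : (csq f).eval x = f.eval (x^2) := by
  rw [csq_apply, Polynomial.eval_comp]; simp

lemma natDegree_cneg (f : ℂ[X]) : (cneg f).natDegree = f.natDegree := by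
  rw [cneg_apply, Polynomial.natDegree_comp]
  simp

lemma natDegree_csq (f : ℂ[X]) : (csq f).natDegree = 2 * f.natDegree := by
  rw [csq_apply, Polynomial.natDegree_comp]
  simp [mul_comm]

lemma leadingCoeff_cneg (f : ℂ[X]) :
    (cneg f).leadingCoeff = f.leadingCoeff * (-1)^f.natDegree := by
  rw [cneg_apply, Polynomial.leadingCoeff_comp (by simp)]
  simp

lemma leadingCoeff_csq (f : ℂ[X]) : (csq f).leadingCoeff = f.leadingCoeff := by
  rw [csq_apply, Polynomial.leadingCoeff_comp (by simp)]
  simp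

lemma cneg_ne_zero {f : ℂ[X]} (hf : f ≠ 0) : cneg f ≠ 0 := by
  intro h
  apply hf
  have := congrArg cneg h
  rwa [cneg_cneg, map_zero] at this

lemma csq_ne_zero {f : ℂ[X]} (hf : f ≠ 0) : csq f ≠ 0 := by
  intro h
  have h2 := congrArg Polynomial.leadingCoeff h
  rw [leadingCoeff_csq, Polynomial.leadingCoeff_zero] at h2
  exact hf (Polynomial.leadingCoeff_eq_zero.mp h2)


lemma cneg_C (a : ℂ) : cneg (Polynomial.C a) = Polynomial.C a := by
  simp [cneg_apply]

lemma cneg_X : cneg Polynomial.X = -Polynomial.X := by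
  simp [cneg_apply]

lemma rm_cneg_le {q : ℂ[X]} (hq : q ≠ 0) (z : ℂ) :
    q.rootMultiplicity (-z) ≤ (cneg q).rootMultiplicity z := by
  rw [Polynomial.le_rootMultiplicity_iff (cneg_ne_zero hq)]
  have h1 : (Polynomial.X - Polynomial.C (-z)) ^ (q.rootMultiplicity (-z)) ∣ q :=
    Polynomial.pow_rootMultiplicity_dvd q (-z)
  have h2 := map_dvd cneg h1
  rw [map_pow, map_sub, cneg_C, cneg_X] at h2
  have h3 : (-Polynomial.X - Polynomial.C (-z)) ^ (q.rootMultiplicity (-z))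
      = (-1)^(q.rootMultiplicity (-z)) * (Polynomial.X - Polynomial.C z) ^ (q.rootMultiplicity (-z)) := by
    rw [← neg_pow]
    congr 1
    simp
    ring
  rw [h3] at h2
  exact dvd_trans (dvd_mul_left _ _) h2

lemma rm_cneg {q : ℂ[X]} (hq : q ≠ 0) (z : ℂ) :
    (cneg q).rootMultiplicity z = q.rootMultiplicity (-z) := by
  refine le_antisymm ?_ (rm_cneg_le hq z)
  have h := rm_cneg_le (cneg_ne_zero hq) (-z)
  rwa [cneg_cneg, neg_neg] at h

lemma rm_csq {q : ℂ[X]} (hq : q ≠ 0) {z : ℂ} (hz : z ≠ 0) :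
    (csq q).rootMultiplicity z = q.rootMultiplicity (z^2) := by
  set m := q.rootMultiplicity (z^2) with hm
  set B := q /ₘ (Polynomial.X - Polynomial.C (z^2))^m with hB
  have hfac : (Polynomial.X - Polynomial.C (z^2))^m * B = q :=
    Polynomial.pow_mul_divByMonic_rootMultiplicity_eq q (z^2)
  have hBev : B.eval (z^2) ≠ 0 :=
    Polynomial.eval_divByMonic_pow_rootMultiplicity_ne_zero (z^2) hq
  have hXsq : csq (Polynomial.X - Polynomial.C (z^2))
      = (Polynomial.X - Polynomial.C z) * (Polynomial.X + Polynomial.C z) := by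
    rw [csq_apply]
    simp only [Polynomial.sub_comp, Polynomial.X_comp, Polynomial.C_comp]
    rw [show Polynomial.C (z^2) = Polynomial.C z ^ 2 from by rw [map_pow]]
    ring
  have hq2 : csq q = (Polynomial.X - Polynomial.C z)^m
      * ((Polynomial.X + Polynomial.C z)^m * csq B) := by
    rw [← hfac, map_mul, map_pow, hXsq, mul_pow]
    ring
  have hqq : csq q ≠ 0 := csq_ne_zero hq
  have hne2 : ((Polynomial.X + Polynomial.C z)^m * csq B) ≠ 0 := by
    intro h
    rw [h, mul_zero] at hq2
    exact hqq hq2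
  rw [hq2, Polynomial.rootMultiplicity_mul (hq2 ▸ hqq), Polynomial.rootMultiplicity_X_sub_C_pow]
  have h0 : ((Polynomial.X + Polynomial.C z)^m * csq B).rootMultiplicity z = 0 := by
    apply Polynomial.rootMultiplicity_eq_zero
    simp only [Polynomial.IsRoot, Polynomial.eval_mul, Polynomial.eval_pow, Polynomial.eval_add,
      Polynomial.eval_X, Polynomial.eval_C, eval_csq]
    intro h
    rcases mul_eq_zero.mp h with h | h
    · have h2 : z + z = 0 := (pow_eq_zero_iff'.mp h).1
      exact hz (add_self_eq_zero.mp h2)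
    · exact hBev h
  omega

lemma coprime_eval {p q : ℂ[X]} (h : IsCoprime p q) {x : ℂ} (hx : q.eval x = 0) :
    p.eval x ≠ 0 := by
  obtain ⟨a, b, hab⟩ := h
  intro hp
  have h2 := congrArg (Polynomial.eval x) hab
  simp [hx, hp] at h2

section main
variable {p q : ℂ[X]}

lemma S1 (hq : q.Monic)
    (dia : (p * cneg q - cneg p * q) * csq q
      = Polynomial.C 2 * Polynomial.X * csq p * (q * cneg q))
    (hpq : IsCoprime p q) :
    q * cneg q = Polynomial.C ((-1:ℂ)^q.natDegree) * csq q := by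
  have hq0 : q ≠ 0 := hq.ne_zero
  have hcn : cneg q ≠ 0 := cneg_ne_zero hq0
  have hcs : csq q ≠ 0 := csq_ne_zero hq0
  have hcop : IsCoprime (csq q) (csq p) := (hpq.symm).map csq
  have hdvd : csq q ∣ Polynomial.C 2 * Polynomial.X * (q * cneg q) := by
    apply hcop.dvd_of_dvd_mul_left
    rw [show csq p * (Polynomial.C 2 * Polynomial.X * (q * cneg q))
        = Polynomial.C 2 * Polynomial.X * csq p * (q * cneg q) from by ring, ← dia]
    exact dvd_mul_left _ _
  obtain ⟨t, ht⟩ := hdvd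
  have hC2 : (Polynomial.C 2 : ℂ[X]) ≠ 0 := by
    simp only [ne_eq, Polynomial.C_eq_zero]; norm_num
  have hLHS0 : Polynomial.C 2 * Polynomial.X * (q * cneg q) ≠ 0 := by
    apply mul_ne_zero (mul_ne_zero hC2 Polynomial.X_ne_zero) (mul_ne_zero hq0 hcn)
  have ht0 : t ≠ 0 := by
    intro h
    rw [h, mul_zero] at ht
    exact hLHS0 ht
  have hdeg : t.natDegree = 1 := by
    have h1 := congrArg Polynomial.natDegree ht
    rw [Polynomial.natDegree_mul (mul_ne_zero hC2 Polynomial.X_ne_zero) (mul_ne_zero hq0 hcn),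
      Polynomial.natDegree_mul hC2 Polynomial.X_ne_zero,
      Polynomial.natDegree_mul hq0 hcn,
      Polynomial.natDegree_mul hcs ht0,
      Polynomial.natDegree_C, Polynomial.natDegree_X, natDegree_cneg, natDegree_csq] at h1
    omega
  have htneg : cneg t = -t := by
    have h := congrArg cneg ht
    simp only [map_mul] at h
    rw [cneg_csq, cneg_cneg, cneg_C, cneg_X] at h
    apply mul_left_cancel₀ hcs
    rw [show csq q * -t = -(csq q * t) from by ring, ← ht, ← h]
    ring
  have ht00 : t.eval 0 = 0 := by
    have h := congrArg (Polynomial.eval 0) htneg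
    rw [eval_cneg, neg_zero, Polynomial.eval_neg] at h
    have h2 : (2:ℂ) * t.eval 0 = 0 := by linear_combination h
    rcases mul_eq_zero.mp h2 with h3 | h3
    · norm_num at h3
    · exact h3
  obtain ⟨s, hts⟩ : Polynomial.X ∣ t := by
    rwa [Polynomial.X_dvd_iff, Polynomial.coeff_zero_eq_eval_zero]
  have hs0 : s ≠ 0 := by
    intro h
    rw [h, mul_zero] at hts
    exact ht0 hts
  have hsdeg : s.natDegree = 0 := by
    have h := hdeg
    rw [hts, Polynomial.natDegree_mul Polynomial.X_ne_zero hs0, Polynomial.natDegree_X] at h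
    omega
  have hsC : s = Polynomial.C (s.coeff 0) := Polynomial.eq_C_of_natDegree_eq_zero hsdeg
  set a := s.coeff 0 with ha
  have hkey : Polynomial.C 2 * (q * cneg q) = Polynomial.C a * csq q := by
    apply mul_left_cancel₀ (Polynomial.X_ne_zero : (Polynomial.X:ℂ[X]) ≠ 0)
    rw [hts, hsC] at ht
    linear_combination ht
  have haval : a = 2 * (-1:ℂ)^q.natDegree := by
    have h := congrArg Polynomial.leadingCoeff hkey
    rw [Polynomial.leadingCoeff_mul, Polynomial.leadingCoeff_mul,
      Polynomial.leadingCoeff_mul, Polynomial.leadingCoeff_C, Polynomial.leadingCoeff_C,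
      leadingCoeff_cneg, leadingCoeff_csq, hq.leadingCoeff] at h
    rw [mul_one, one_mul] at h
    linear_combination -h
  apply mul_left_cancel₀ hC2
  rw [show Polynomial.C 2 * (Polynomial.C ((-1:ℂ)^q.natDegree) * csq q)
      = Polynomial.C (2 * (-1:ℂ)^q.natDegree) * csq q from by rw [map_mul]; ring,
    ← haval, ← hkey]

lemma S2 (hq : q.Monic)
    (dia : (p * cneg q - cneg p * q) * csq q
      = Polynomial.C 2 * Polynomial.X * csq p * (q * cneg q))
    (hpq : IsCoprime p q) :
    p * cneg q - cneg p * q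
      = Polynomial.C 2 * Polynomial.C ((-1:ℂ)^q.natDegree) * Polynomial.X * csq p := by
  have hcs : csq q ≠ 0 := csq_ne_zero hq.ne_zero
  have hS1 := S1 hq dia hpq
  apply mul_right_cancel₀ hcs
  linear_combination dia + (Polynomial.C 2 * Polynomial.X * csq p) * hS1

lemma E1 (hq : q.Monic)
    (dia : (p * cneg q - cneg p * q) * csq q
      = Polynomial.C 2 * Polynomial.X * csq p * (q * cneg q))
    (hpq : IsCoprime p q) {z : ℂ} (hz : z ≠ 0) :
    q.rootMultiplicity z + q.rootMultiplicity (-z) = q.rootMultiplicity (z^2) := by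
  have hq0 : q ≠ 0 := hq.ne_zero
  have hcn : cneg q ≠ 0 := cneg_ne_zero hq0
  have hcs : csq q ≠ 0 := csq_ne_zero hq0
  have hu : (Polynomial.C ((-1:ℂ)^q.natDegree)) ≠ 0 := by
    simp only [ne_eq, Polynomial.C_eq_zero]
    exact pow_ne_zero _ (by norm_num)
  have hCrm : (Polynomial.C ((-1:ℂ)^q.natDegree)).rootMultiplicity z = 0 :=
    Polynomial.rootMultiplicity_eq_zero (by
      simp only [Polynomial.IsRoot, Polynomial.eval_C]
      exact pow_ne_zero _ (by norm_num))
  have h := congrArg (Polynomial.rootMultiplicity z) (S1 hq dia hpq)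
  rw [Polynomial.rootMultiplicity_mul (mul_ne_zero hq0 hcn),
    Polynomial.rootMultiplicity_mul (mul_ne_zero hu hcs),
    rm_cneg hq0, rm_csq hq0 hz, hCrm, zero_add] at h
  exact h

lemma E2 (hq : q.Monic)
    (dia : (p * cneg q - cneg p * q) * csq q
      = Polynomial.C 2 * Polynomial.X * csq p * (q * cneg q))
    (hpq : IsCoprime p q) :
    q.rootMultiplicity 0 ≤ 1 := by
  by_contra h
  push_neg at h
  have hq0 : q ≠ 0 := hq.ne_zero
  have hX2q : (Polynomial.X:ℂ[X])^2 ∣ q := by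
    have h1 : (Polynomial.X - Polynomial.C (0:ℂ))^(q.rootMultiplicity 0) ∣ q :=
      Polynomial.pow_rootMultiplicity_dvd q 0
    rw [map_zero, sub_zero] at h1
    exact dvd_trans (pow_dvd_pow _ (by omega)) h1
  have hX2qn : (Polynomial.X:ℂ[X])^2 ∣ cneg q := by
    obtain ⟨t, ht⟩ := hX2q
    have := congrArg cneg ht
    rw [map_mul, map_pow, cneg_X] at this
    exact ⟨cneg t, by rw [this]; ring⟩
  have hdvd : (Polynomial.X:ℂ[X])^2 ∣ p * cneg q - cneg p * q :=
    dvd_sub (Dvd.dvd.mul_left hX2qn p) (Dvd.dvd.mul_left hX2q (cneg p))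
  rw [S2 hq dia hpq] at hdvd
  have hXdvd : (Polynomial.X:ℂ[X]) ∣ Polynomial.C 2 * Polynomial.C ((-1:ℂ)^q.natDegree) * csq p := by
    have h2 : (Polynomial.X:ℂ[X]) * Polynomial.X ∣ Polynomial.X *
        (Polynomial.C 2 * Polynomial.C ((-1:ℂ)^q.natDegree) * csq p) := by
      rw [show Polynomial.X * (Polynomial.C 2 * Polynomial.C ((-1:ℂ)^q.natDegree) * csq p)
          = Polynomial.C 2 * Polynomial.C ((-1:ℂ)^q.natDegree) * Polynomial.X * csq p from by ring,
        ← sq]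
      exact hdvd
    exact (mul_dvd_mul_iff_left (Polynomial.X_ne_zero : (Polynomial.X:ℂ[X]) ≠ 0)).mp h2
  have hp0 : p.eval 0 = 0 := by
    obtain ⟨t, ht⟩ := hXdvd
    have h2 := congrArg (Polynomial.eval 0) ht
    simp only [Polynomial.eval_mul, Polynomial.eval_C, Polynomial.eval_X, eval_csq] at h2
    rw [show (0:ℂ)^2 = 0 from by ring] at h2
    have : (2:ℂ) * ((-1:ℂ)^q.natDegree) ≠ 0 := by
      apply mul_ne_zero (by norm_num) (pow_ne_zero _ (by norm_num))
    rcases mul_eq_zero.mp (by linear_combination h2 : (2 * ((-1:ℂ)^q.natDegree)) * p.eval 0 = 0) with h3 | h3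
    · exact absurd h3 this
    · exact h3
  have hq00 : q.eval 0 = 0 := by
    obtain ⟨t, ht⟩ := hX2q
    rw [ht]
    simp
  exact coprime_eval hpq hq00 hp0

end main
lemma real_pow_fix {t : ℝ} (ht : 0 < t) {n : ℕ} (hn : 2 ≤ n) (h : t^n = t) : t = 1 := by
  rcases lt_trichotomy t 1 with h1 | h1 | h1
  · have h2 : t^n ≤ t^2 := pow_le_pow_of_le_one (le_of_lt ht) (le_of_lt h1) hn
    nlinarith
  · exact h1
  · have h2 : t^2 ≤ t^n := pow_le_pow_right₀ (le_of_lt h1) hn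
    nlinarith

section cyc
variable {q : ℂ[X]}

lemma hsq_pow (z : ℂ) (c : ℕ) : (z^(2^c))^2 = z^(2^(c+1)) := by
  rw [← pow_mul, pow_succ]

lemma G1 (hq0 : q ≠ 0)
    (hE1 : ∀ z : ℂ, z ≠ 0 →
      q.rootMultiplicity z + q.rootMultiplicity (-z) = q.rootMultiplicity (z^2))
    {z : ℂ} (hz0 : z ≠ 0) (hz : q.IsRoot z) :
    ∃ k, 1 ≤ k ∧ z^(2^k) = z := by
  have hx0 : ∀ c : ℕ, z^(2^c) ≠ 0 := fun c => pow_ne_zero _ hz0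
  have hmono1 : ∀ c, q.rootMultiplicity (z^(2^c)) ≤ q.rootMultiplicity (z^(2^(c+1))) := by
    intro c
    rw [← hsq_pow z c, ← hE1 _ (hx0 c)]
    exact Nat.le_add_right _ _
  have hmono : Monotone (fun c => q.rootMultiplicity (z^(2^c))) :=
    monotone_nat_of_le_succ hmono1
  have hroot : ∀ c, q.IsRoot (z^(2^c)) := by
    intro c
    induction c with
    | zero => simpa using hz
    | succ n ih =>
      have h1 : 0 < q.rootMultiplicity (z^(2^n)) := (Polynomial.rootMultiplicity_pos hq0).2 ih
      exact (Polynomial.rootMultiplicity_pos hq0).1 (lt_of_lt_of_le h1 (hmono1 n))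
  have hfin : Set.Finite {x : ℂ | q.IsRoot x} := Polynomial.finite_setOf_isRoot hq0
  have hP : ∃ n : ℕ, ∃ j, n < j ∧ z^(2^n) = z^(2^j) := by
    haveI := hfin.to_subtype
    obtain ⟨i, j, hne, hfe⟩ := Finite.exists_ne_map_eq_of_infinite
      (fun c : ℕ => (⟨z^(2^c), hroot c⟩ : {x : ℂ | q.IsRoot x}))
    have hval : z^(2^i) = z^(2^j) := congrArg Subtype.val hfe
    rcases lt_or_gt_of_ne hne with h | h
    · exact ⟨i, j, h, hval⟩
    · exact ⟨j, i, h, hval.symm⟩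
  classical
  set i0 := Nat.find hP with hi0def
  obtain ⟨j0, hj0, heq0⟩ := Nat.find_spec hP
  rw [← hi0def] at hj0 heq0
  by_cases h0 : i0 = 0
  · rw [h0] at heq0 hj0
    refine ⟨j0, by omega, ?_⟩
    simpa using heq0.symm
  · exfalso
    obtain ⟨i1, hi1⟩ : ∃ i1, i0 = i1 + 1 := ⟨i0 - 1, by omega⟩
    set w := z^(2^i1) with hw
    set v := z^(2^(j0-1)) with hv
    have hvsq : v^2 = z^(2^j0) := by
      rw [hv, hsq_pow]
      congr 2
      omega
    have hwsq : w^2 = z^(2^i0) := by rw [hw, hsq_pow, ← hi1]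
    have hwv2 : w^2 = v^2 := by rw [hwsq, hvsq, heq0]
    have hwne : w ≠ v := by
      intro h
      have hPi1 : ∃ jj, i1 < jj ∧ z^(2^i1) = z^(2^jj) := ⟨j0 - 1, by omega, h⟩
      exact Nat.find_min hP (show i1 < i0 by omega) hPi1
    have hwv : w = -v := by
      have h2 : (w - v) * (w + v) = 0 := by linear_combination hwv2
      rcases mul_eq_zero.mp h2 with h3 | h3
      · exact absurd (sub_eq_zero.mp h3) hwne
      · exact eq_neg_of_add_eq_zero_left h3
    have hgj : q.rootMultiplicity v = q.rootMultiplicity (z^(2^j0)) := by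
      have h1 : q.rootMultiplicity (z^(2^i0)) ≤ q.rootMultiplicity v :=
        hmono (show i0 ≤ j0 - 1 by omega)
      have h2 : q.rootMultiplicity v ≤ q.rootMultiplicity (z^(2^j0)) := by
        have h3 := hmono (show j0 - 1 ≤ j0 by omega)
        exact h3
      have h4 : q.rootMultiplicity (z^(2^j0)) = q.rootMultiplicity (z^(2^i0)) := by rw [← heq0]
      omega
    have hE := hE1 v (hx0 _)
    rw [hvsq, ← hgj] at hE
    have hnv : q.rootMultiplicity (-v) = 0 := by omega
    have hwroot : q.IsRoot (-v) := hwv ▸ hroot i1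
    have := (Polynomial.rootMultiplicity_pos hq0).2 hwroot
    omega

end cyc
lemma eval_i {q : ℂ[X]} {u : ℂ}
    (hS1 : q * cneg q = Polynomial.C u * csq q)
    {x : ℂ} {m : ℕ} (hm : q.rootMultiplicity x = m) (hm2 : q.rootMultiplicity (x^2) = m) :
    (q /ₘ (Polynomial.X - Polynomial.C x)^m).eval x * q.eval (-x)
      = u * (2*x)^m * ((q /ₘ (Polynomial.X - Polynomial.C (x^2))^m).eval (x^2)) := by
  have hA := Polynomial.pow_mul_divByMonic_rootMultiplicity_eq q x
  rw [hm] at hA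
  have hB := Polynomial.pow_mul_divByMonic_rootMultiplicity_eq q (x^2)
  rw [hm2] at hB
  have hXsq : csq (Polynomial.X - Polynomial.C (x^2))
      = (Polynomial.X - Polynomial.C x) * (Polynomial.X + Polynomial.C x) := by
    rw [csq]
    simp only [Polynomial.coe_eval₂RingHom, Polynomial.eval₂_sub, Polynomial.eval₂_X,
      Polynomial.eval₂_C]
    rw [show Polynomial.C (x^2) = Polynomial.C x ^ 2 from by rw [map_pow]]
    ring
  have hstep : (q /ₘ (Polynomial.X - Polynomial.C x)^m) * cneg q
      = Polynomial.C u * ((Polynomial.X + Polynomial.C x)^m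
        * csq (q /ₘ (Polynomial.X - Polynomial.C (x^2))^m)) := by
    apply mul_left_cancel₀ (pow_ne_zero m (Polynomial.X_sub_C_ne_zero x))
    calc (Polynomial.X - Polynomial.C x)^m * ((q /ₘ (Polynomial.X - Polynomial.C x)^m) * cneg q)
        = q * cneg q := by linear_combination (cneg q) * hA
      _ = Polynomial.C u * csq q := hS1
      _ = Polynomial.C u * csq ((Polynomial.X - Polynomial.C (x^2))^m
            * (q /ₘ (Polynomial.X - Polynomial.C (x^2))^m)) := by rw [hB]
      _ = (Polynomial.X - Polynomial.C x)^m * (Polynomial.C u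
            * ((Polynomial.X + Polynomial.C x)^m
              * csq (q /ₘ (Polynomial.X - Polynomial.C (x^2))^m))) := by
          rw [map_mul, map_pow, hXsq, mul_pow]; ring
  have hev := congrArg (Polynomial.eval x) hstep
  simp only [Polynomial.eval_mul, Polynomial.eval_pow, Polynomial.eval_add, Polynomial.eval_X,
    Polynomial.eval_C, eval_cneg, eval_csq] at hev
  rw [show x + x = 2*x from by ring] at hev
  linear_combination hev

section main2
variable {p q : ℂ[X]}
lemma G2 (hq : q.Monic) (hpq : IsCoprime p q)
    (hS1 : q * cneg q = Polynomial.C ((-1:ℂ)^q.natDegree) * csq q)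
    (hS2 : p * cneg q - cneg p * q
      = Polynomial.C 2 * Polynomial.C ((-1:ℂ)^q.natDegree) * Polynomial.X * csq p)
    (hE1 : ∀ z : ℂ, z ≠ 0 →
      q.rootMultiplicity z + q.rootMultiplicity (-z) = q.rootMultiplicity (z^2))
    {z : ℂ} (hz0 : z ≠ 0) (hz : q.IsRoot z)
    {k : ℕ} (hk : 1 ≤ k) (hzk : z^(2^k) = z) :
    q.rootMultiplicity z = 1 := by
  have hq0 : q ≠ 0 := hq.ne_zero
  set u : ℂ := (-1:ℂ)^q.natDegree with hu
  have hx0 : ∀ c : ℕ, z^(2^c) ≠ 0 := fun c => pow_ne_zero _ hz0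
  have hmono1 : ∀ c, q.rootMultiplicity (z^(2^c)) ≤ q.rootMultiplicity (z^(2^(c+1))) := by
    intro c
    rw [← hsq_pow z c, ← hE1 _ (hx0 c)]
    exact Nat.le_add_right _ _
  have hmono : Monotone (fun c => q.rootMultiplicity (z^(2^c))) :=
    monotone_nat_of_le_succ hmono1
  have hz00 : z^(2^0) = z := by norm_num
  set m := q.rootMultiplicity z with hmdef
  have hm1 : 1 ≤ m := (Polynomial.rootMultiplicity_pos hq0).2 hz
  have hconst : ∀ c ≤ k, q.rootMultiplicity (z^(2^c)) = m := by
    intro c hc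
    have h1 : m ≤ q.rootMultiplicity (z^(2^c)) := by
      have h := hmono (Nat.zero_le c)
      simpa [hz00] using h
    have h2 : q.rootMultiplicity (z^(2^c)) ≤ m := by
      have h := hmono hc
      simp only at h
      rwa [hzk] at h
    omega
  have hroot : ∀ c, c ≤ k → q.IsRoot (z^(2^c)) := by
    intro c hc
    exact (Polynomial.rootMultiplicity_pos hq0).1 (by rw [hconst c hc]; omega)
  have hnv : ∀ c, c < k → q.rootMultiplicity (-(z^(2^c))) = 0 := by
    intro c hc
    have hE := hE1 (z^(2^c)) (hx0 c)
    rw [hsq_pow] at hE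
    rw [hconst c (le_of_lt hc), hconst (c+1) hc] at hE
    omega
  have hQm : ∀ c, c < k → q.eval (-(z^(2^c))) ≠ 0 := by
    intro c hc h
    have h2 := (Polynomial.rootMultiplicity_pos hq0).2 h
    rw [hnv c hc] at h2
    omega
  have habsz : ‖z‖ = 1 := by
    have h2k : 2 ≤ 2^k := by
      calc 2 = 2^1 := (pow_one 2).symm
      _ ≤ 2^k := Nat.pow_le_pow_right (by norm_num) hk
    apply real_pow_fix (norm_pos_iff.mpr hz0) h2k
    rw [← norm_pow, hzk]
  have habs : ∀ c, ‖z^(2^c)‖ = 1 := by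
    intro c; rw [norm_pow, habsz, one_pow]
  have habsu : ‖u‖ = 1 := by
    rw [hu, norm_pow]
    simp
  -- recurrences
  have hArec : ∀ c, c < k →
      ‖(q /ₘ (Polynomial.X - Polynomial.C (z^(2^c)))^m).eval (z^(2^c))‖
        * ‖q.eval (-(z^(2^c)))‖
      = 2^m * ‖(q /ₘ (Polynomial.X - Polynomial.C (z^(2^(c+1))))^m).eval (z^(2^(c+1)))‖ := by
    intro c hc
    have hi := eval_i hS1 (x := z^(2^c)) (hconst c (le_of_lt hc))
      (by rw [hsq_pow]; exact hconst (c+1) hc)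
    rw [hsq_pow] at hi
    have h2 := congrArg norm hi
    simp only [norm_mul] at h2
    rw [norm_pow (2 * z^(2^c)) m, norm_mul 2 (z^(2^c)),
      Complex.norm_two, habs c, habsu] at h2
    rw [h2]
    norm_num
  have hPrec : ∀ c, c < k →
      ‖p.eval (z^(2^c))‖ * ‖q.eval (-(z^(2^c)))‖
        = 2 * ‖p.eval (z^(2^(c+1)))‖ := by
    intro c hc
    have hev := congrArg (Polynomial.eval (z^(2^c))) hS2
    simp only [Polynomial.eval_sub, Polynomial.eval_mul, Polynomial.eval_C, Polynomial.eval_X,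
      eval_cneg, eval_csq] at hev
    have hqev : q.eval (z^(2^c)) = 0 := hroot c (le_of_lt hc)
    rw [hqev, mul_zero, sub_zero, hsq_pow] at hev
    have h2 := congrArg norm hev
    simp only [norm_mul] at h2
    rw [habsu, habs c, Complex.norm_two] at h2
    rw [h2]
    ring
  -- products
  have hprodA : ∀ j, j ≤ k →
      ‖(q /ₘ (Polynomial.X - Polynomial.C (z^(2^0)))^m).eval (z^(2^0))‖
        * (∏ c ∈ Finset.range j, ‖q.eval (-(z^(2^c)))‖)
      = (2^m)^j * ‖(q /ₘ (Polynomial.X - Polynomial.C (z^(2^j)))^m).eval (z^(2^j))‖ := by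
    intro j hj
    induction j with
    | zero => simp
    | succ n ih =>
      rw [Finset.prod_range_succ, ← mul_assoc, ih (by omega), mul_assoc,
        hArec n (by omega), pow_succ]
      ring
  have hprodP : ∀ j, j ≤ k →
      ‖p.eval (z^(2^0))‖
        * (∏ c ∈ Finset.range j, ‖q.eval (-(z^(2^c)))‖)
      = 2^j * ‖p.eval (z^(2^j))‖ := by
    intro j hj
    induction j with
    | zero => simp
    | succ n ih =>
      rw [Finset.prod_range_succ, ← mul_assoc, ih (by omega), mul_assoc,
        hPrec n (by omega), pow_succ]
      ring
  have hAk := hprodA k le_rfl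
  have hPk := hprodP k le_rfl
  rw [hzk, hz00] at hAk hPk
  have hA0 : ‖(q /ₘ (Polynomial.X - Polynomial.C z)^m).eval z‖ ≠ 0 := by
    have h := Polynomial.eval_divByMonic_pow_rootMultiplicity_ne_zero z hq0
    exact norm_ne_zero_iff.mpr h
  have hP0 : ‖p.eval z‖ ≠ 0 :=
    norm_ne_zero_iff.mpr (coprime_eval hpq hz)
  
  have hQA : (∏ c ∈ Finset.range k, ‖q.eval (-(z^(2^c)))‖) = (2^m)^k :=
    mul_left_cancel₀ hA0 (by rw [hAk]; ring)
  have hQP : (∏ c ∈ Finset.range k, ‖q.eval (-(z^(2^c)))‖) = 2^k :=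
    mul_left_cancel₀ hP0 (by rw [hPk]; ring)
  have h2eq : ((2:ℝ)^m)^k = 2^k := by rw [← hQA, hQP]
  have hmk : m * k = k := by
    have hnat : (2:ℕ)^(m*k) = 2^k := by
      have := h2eq
      rw [← pow_mul] at this
      exact_mod_cast this
    exact Nat.pow_right_injective le_rfl hnat
  have : m = 1 := Nat.eq_of_mul_eq_mul_right (by omega) (by omega : m * k = 1 * k)
  omega

end main2
end ST16
end ST16sec

/-- If `R` is fixed by `𝔉`, then the denominator of `R` in lowest terms is squarefree
(all poles of `R` are simple), and each of its roots is `0` or an `r`-th root of unity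
for some odd positive `r`. -/
theorem stmt_16 (F : RatFunc ℂ → RatFunc ℂ)
    (hF : ∀ R : RatFunc ℂ, ∀ k : ℤ, coeffL (F R) k = coeffL R (2 * k + 1))
    (R : RatFunc ℂ) (hR : F R = R) :
    Squarefree R.denom ∧
    ∀ z : ℂ, R.denom.eval z = 0 →
      z = 0 ∨ ∃ r : ℕ, Odd r ∧ 0 < r ∧ z ^ r = 1 := by
  classical
  open ST16 in
  have hyp : ∀ k : ℤ, (R : LaurentSeries ℂ).coeff (2*k+1) = (R : LaurentSeries ℂ).coeff k := by
    intro k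
    have h := hF R k
    rw [hR] at h
    exact h.symm
  have dia := ST16.diamond R hyp
  set p := R.num with hpdef
  set q := R.denom with hqdef
  have hq : q.Monic := R.monic_denom
  have hq0 : q ≠ 0 := hq.ne_zero
  have hpq : IsCoprime p q := R.isCoprime_num_denom
  have hE1 : ∀ z : ℂ, z ≠ 0 →
      q.rootMultiplicity z + q.rootMultiplicity (-z) = q.rootMultiplicity (z^2) :=
    fun z hz => ST16.E1 hq dia hpq hz
  constructor
  · have hrm : ∀ z : ℂ, q.rootMultiplicity z ≤ 1 := by
      intro z
      by_cases hz0 : z = 0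
      · subst hz0
        exact ST16.E2 hq dia hpq
      by_cases hz : q.IsRoot z
      · obtain ⟨k, hk, hzk⟩ := ST16.G1 hq0 hE1 hz0 hz
        rw [ST16.G2 hq hpq (ST16.S1 hq dia hpq) (ST16.S2 hq dia hpq) hE1 hz0 hz hk hzk]
      · rw [Polynomial.rootMultiplicity_eq_zero hz]
        omega
    have hnodup : q.roots.Nodup := by
      rw [Multiset.nodup_iff_count_le_one]
      intro a
      rw [Polynomial.count_roots]
      exact hrm a
    have hsep : q.Separable :=
      (Polynomial.nodup_roots_iff_of_splits hq0 (IsAlgClosed.splits q)).mp hnodup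
    exact PerfectField.separable_iff_squarefree.mp hsep
  · intro z hzev
    by_cases hz0 : z = 0
    · exact Or.inl hz0
    right
    have hz : q.IsRoot z := hzev
    obtain ⟨k, hk, hzk⟩ := ST16.G1 hq0 hE1 hz0 hz
    have h2 : 2^k = 2 * 2^(k-1) := by
      rw [← pow_succ']
      congr 1
      omega
    have hpos : 0 < 2^(k-1) := Nat.pow_pos (by norm_num)
    refine ⟨2^k - 1, ?_, by omega, ?_⟩
    · rw [Nat.odd_iff]
      omega
    · have hstep : z^(2^k - 1) * z = z := by
        rw [← pow_succ]
        rw [show 2^k - 1 + 1 = 2^k from by omega]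
        exact hzk
      have := mul_right_cancel₀ hz0 (hstep.trans (one_mul z).symm)
      exact this
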